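/- For a monotone submodular f with f(∅)=0, the greedy algorithm run for t steps (adding at each step a marginally maximal element) produces a set S_t with f(S_t) ≥ (1 - (1 - 1/C)^t) · max{ f(S) : |S| ≤ C }. -/

import Mathlib

/-- After `t` greedy steps, a monotone submodular function with `f(∅)=0` satisfies
`f(S_t) ≥ (1 - (1 - 1/C)^t) · max{ f(T) : |T| ≤ C }`. -/
theorem greedy_partial_approx
    {V : Type*} [Fintype V] [DecidableEq V]
    (f : Finset V → ℝ) (C : ℕ) (hC : 0 < C)
    (hempty : f ∅ = 0)
    (hmono : ∀ A B : Finset V, A ⊆ B → f A ≤ f B)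
    (hsub : ∀ A B : Finset V, A ⊆ B → ∀ x ∉ B,
      f (insert x B) - f B ≤ f (insert x A) - f A)
    (t : ℕ) (S : ℕ → Finset V) (hS0 : S 0 = ∅)
    (hstep : ∀ t' < t, ∃ x ∉ S t', S (t' + 1) = insert x (S t') ∧
      ∀ y ∉ S t', f (insert y (S t')) ≤ f (insert x (S t'))) :
    ∀ T : Finset V, T.card ≤ C →
      (1 - (1 - 1 / (C : ℝ)) ^ t) * f T ≤ f (S t) := by
  intro T hT
  have hfT : 0 ≤ f T := hempty ▸ hmono ∅ T (Finset.empty_subset T)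
  have hcpos : (0:ℝ) < C := by exact_mod_cast hC
  have hc1 : (1:ℝ) ≤ C := by exact_mod_cast hC
  have hr0 : (0:ℝ) ≤ 1 - 1 / C := by
    rw [sub_nonneg, div_le_one hcpos]; exact hc1
  -- marginal sum lemma
  have hsum : ∀ (A B : Finset V), f (A ∪ B) - f A ≤ ∑ y ∈ B, (f (insert y A) - f A) := by
    intro A B
    induction B using Finset.induction_on with
    | empty => simp
    | @insert x B' hx ih =>
      rw [Finset.union_insert, Finset.sum_insert hx]
      by_cases hxA : x ∈ A ∪ B'
      · rw [Finset.insert_eq_self.mpr hxA]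
        have h0 : 0 ≤ f (insert x A) - f A :=
          sub_nonneg.mpr (hmono A (insert x A) (Finset.subset_insert x A))
        linarith
      · have := hsub A (A ∪ B') Finset.subset_union_left x hxA
        linarith
  -- per-step bound
  have key : ∀ i < t, f T - f (S i) ≤ (C : ℝ) * (f (S (i+1)) - f (S i)) := by
    intro i hi
    obtain ⟨x, hx, hSi, hmax⟩ := hstep i hi
    have hΔ : 0 ≤ f (S (i+1)) - f (S i) := by
      rw [hSi]
      exact sub_nonneg.mpr (hmono (S i) (insert x (S i)) (Finset.subset_insert x (S i)))
    have h1 : f T ≤ f (S i ∪ T) := hmono T (S i ∪ T) Finset.subset_union_right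
    have h2 := hsum (S i) T
    have h3 : ∑ y ∈ T, (f (insert y (S i)) - f (S i)) ≤
        ∑ _y ∈ T, (f (S (i+1)) - f (S i)) := by
      apply Finset.sum_le_sum
      intro y _
      by_cases hy : y ∈ S i
      · rw [Finset.insert_eq_self.mpr hy]; linarith
      · have := hmax y hy
        rw [hSi]; linarith
    rw [Finset.sum_const, nsmul_eq_mul] at h3
    have h4 : (T.card : ℝ) * (f (S (i+1)) - f (S i)) ≤ (C : ℝ) * (f (S (i+1)) - f (S i)) := by
      apply mul_le_mul_of_nonneg_right _ hΔ
      exact_mod_cast hT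
    linarith
  -- main induction
  have main : ∀ i, i ≤ t → f T - f (S i) ≤ (1 - 1 / C) ^ i * f T := by
    intro i
    induction i with
    | zero => intro _; simp [hS0, hempty]
    | succ i ih =>
      intro hit
      have hi : i < t := hit
      have h1 := key i hi
      have h2 := ih (le_of_lt hi)
      have h3 : f T - f (S (i+1)) ≤ (1 - 1 / C) * (f T - f (S i)) := by
        have hdiv : (f T - f (S i)) / C ≤ f (S (i+1)) - f (S i) :=
          (div_le_iff₀ hcpos).mpr (by linarith)
        have : (1 - 1 / C) * (f T - f (S i)) = (f T - f (S i)) - (f T - f (S i)) / C := by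
          field_simp
        linarith [this]
      calc f T - f (S (i+1)) ≤ (1 - 1 / C) * (f T - f (S i)) := h3
      _ ≤ (1 - 1 / C) * ((1 - 1 / C) ^ i * f T) := mul_le_mul_of_nonneg_left h2 hr0
      _ = (1 - 1 / C) ^ (i+1) * f T := by ring
  have := main t le_rfl
  rw [one_sub_mul]
  linarith
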